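/- Let d ≥ 2 and let T ⊂ ℝ^d be a clean lattice d-simplex with at least two interior lattice points. Let w_1 ≠ w_2 be lattice points in the interior of T and let v ≠ v' be vertices of T. Suppose the four points w_1, w_2, v, v' lie in a common 2-dimensional affine subspace, each is an extreme point of Q = conv{w_1, w_2, v, v'}, and q_1, q_2, q_3, q_4 is a cyclic vertex order of the quadrilateral Q (so the edges of Q are [q_1,q_2], [q_2,q_3], [q_3,q_4], [q_4,q_1]). Then no edge of Q is parallel to its opposite edge: q_2 − q_1 is not a real scalar multiple of q_4 − q_3, and q_3 − q_2 is not a real scalar multiple of q_1 − q_4. -/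

import Mathlib

open MeasureTheory Set
open scoped ENNReal

noncomputable section

/-- A point of `ℝ^d` is a lattice point if all its coordinates are integers. -/
def IsLatticePt (d : ℕ) (x : Fin d → ℝ) : Prop := ∀ i, ∃ z : ℤ, x i = (z : ℝ)

/-- A lattice `d`-simplex: the convex hull of `d+1` affinely independent points of `ℤ^d`. -/
def IsLatticeSimplex (d : ℕ) (T : Set (Fin d → ℝ)) : Prop :=
  ∃ v : Fin (d + 1) → Fin d → ℤ,
    AffineIndependent ℝ (fun i => fun j => ((v i j : ℤ) : ℝ)) ∧
    T = convexHull ℝ (Set.range (fun i => fun j => ((v i j : ℤ) : ℝ)))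

/-- A lattice `d`-polytope: convex hull of a finite set of lattice points affinely
spanning `ℝ^d`. -/
def IsLatticePolytope (d : ℕ) (P : Set (Fin d → ℝ)) : Prop :=
  ∃ F : Finset (Fin d → ℤ),
    affineSpan ℝ ((fun v : Fin d → ℤ => fun j : Fin d => (v j : ℝ)) '' ↑F) = ⊤ ∧
    P = convexHull ℝ ((fun v : Fin d → ℤ => fun j : Fin d => (v j : ℝ)) '' ↑F)

/-- Clean: the only lattice points on the boundary are the vertices (extreme points). -/
def IsClean (d : ℕ) (P : Set (Fin d → ℝ)) : Prop :=
  frontier P ∩ {x | IsLatticePt d x} = Set.extremePoints ℝ P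

/-- Unimodular equivalence of subsets of `ℝ^d`. -/
def UnimodEquiv (d : ℕ) (P Q : Set (Fin d → ℝ)) : Prop :=
  ∃ (M : Matrix (Fin d) (Fin d) ℤ) (u : Fin d → ℤ),
    (M.det = 1 ∨ M.det = -1) ∧
    (fun x => (M.map (fun z : ℤ => (z : ℝ))).mulVec x + (fun i => (u i : ℝ))) '' P = Q

/-- `S_d(k) = conv(e_1, …, e_d, -k(e_1 + ⋯ + e_d))`. -/
def Sdk (d k : ℕ) : Set (Fin d → ℝ) :=
  convexHull ℝ
    ((Set.range fun i : Fin d => (Pi.single i 1 : Fin d → ℝ)) ∪ {fun _ => -(k : ℝ)})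

/-- `T_{a_1,…,a_d}`: vertex set `{0, e_1, …, e_{d-1}, (a_1,…,a_d)}`. -/
def Ta (d : ℕ) (a : Fin d → ℤ) : Set (Fin d → ℝ) :=
  convexHull ℝ
    ({(0 : Fin d → ℝ)} ∪
      {x | ∃ i : Fin d, i.val < d - 1 ∧ x = (Pi.single i 1 : Fin d → ℝ)} ∪
      {fun i => (a i : ℝ)})

namespace NPE
variable {d : ℕ}

def cz (X : Fin d → ℤ) : Fin d → ℝ := fun i => (X i : ℝ)

lemma lattice_sub {x y : Fin d → ℝ} (hx : IsLatticePt d x) (hy : IsLatticePt d y) :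
    ∃ Z : Fin d → ℤ, x - y = cz Z := by
  choose X hX using hx; choose Y hY using hy
  exact ⟨fun i => X i - Y i, by funext i; simp [cz, Pi.sub_apply, hX, hY]⟩

lemma lattice_add_cz {x : Fin d → ℝ} (hx : IsLatticePt d x) (G : Fin d → ℤ) :
    IsLatticePt d (x + cz G) := by
  intro i
  obtain ⟨z, hz⟩ := hx i
  exact ⟨z + G i, by simp [cz, Pi.add_apply, hz]⟩

lemma para {X Y : Fin d → ℤ} (hX : cz X ≠ 0) {c : ℝ} (h : cz Y = c • cz X) :
    ∃ (G : Fin d → ℤ) (p q : ℤ), 0 < q ∧ cz X = (q : ℝ) • cz G ∧ cz Y = (p : ℝ) • cz G := by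
  have hex : ∃ i, X i ≠ 0 := by
    by_contra hc
    push_neg at hc
    exact hX (by funext i; simp [cz, hc i])
  obtain ⟨i0, hi0⟩ := hex
  have hre : ∀ j, (Y j : ℝ) = c * (X j : ℝ) := by
    intro j
    have := congrFun h j
    simpa [cz] using this
  have hkey : ∀ j, X i0 * Y j = Y i0 * X j := by
    intro j
    have : ((X i0 * Y j : ℤ) : ℝ) = ((Y i0 * X j : ℤ) : ℝ) := by
      push_cast
      rw [hre j, hre i0]; ring
    exact_mod_cast this
  set g0 : ℤ := (Int.gcd (X i0) (Y i0) : ℤ) with hg0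
  have hg0pos : 0 < g0 := by
    rw [hg0]
    exact_mod_cast Int.gcd_pos_of_ne_zero_left (Y i0) hi0
  set n' : ℤ := X i0 / g0 with hn'
  set m' : ℤ := Y i0 / g0 with hm'
  have hXi0 : g0 * n' = X i0 := Int.mul_ediv_cancel' (Int.gcd_dvd_left _ _)
  have hYi0 : g0 * m' = Y i0 := Int.mul_ediv_cancel' (Int.gcd_dvd_right _ _)
  have hco : Int.gcd n' m' = 1 := by
    apply Int.gcd_div_gcd_div_gcd
    exact Int.gcd_pos_of_ne_zero_left (Y i0) hi0
  have hn'0 : n' ≠ 0 := by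
    intro hc
    rw [hc, mul_zero] at hXi0
    exact hi0 hXi0.symm
  have hkey2 : ∀ j, n' * Y j = m' * X j := by
    intro j
    have h2 : g0 * (n' * Y j) = g0 * (m' * X j) := by
      rw [← mul_assoc, ← mul_assoc, hXi0, hYi0]; exact hkey j
    exact mul_left_cancel₀ (ne_of_gt hg0pos) h2
  have hdvd : ∀ j, n' ∣ X j := by
    intro j
    have : n' ∣ m' * X j := ⟨Y j, (hkey2 j).symm⟩
    exact Int.dvd_of_dvd_mul_right_of_gcd_one this hco
  set G : Fin d → ℤ := fun j => X j / n' with hG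
  have hXG : ∀ j, X j = n' * G j := fun j => (Int.mul_ediv_cancel' (hdvd j)).symm
  have hYG : ∀ j, Y j = m' * G j := by
    intro j
    have h2 : n' * Y j = n' * (m' * G j) := by
      rw [hkey2 j, hXG j]; ring
    exact mul_left_cancel₀ hn'0 h2
  rcases lt_or_gt_of_ne hn'0 with hneg | hpos
  · refine ⟨fun j => -G j, -m', -n', by omega, ?_, ?_⟩
    · funext j; simp only [cz, hXG j, Pi.smul_apply, smul_eq_mul]; push_cast; ring
    · funext j; simp only [cz, hYG j, Pi.smul_apply, smul_eq_mul]; push_cast; ring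
  · refine ⟨G, m', n', hpos, ?_, ?_⟩
    · funext j; simp only [cz, hXG j, Pi.smul_apply, smul_eq_mul]; push_cast; ring
    · funext j; simp only [cz, hYG j, Pi.smul_apply, smul_eq_mul]; push_cast; ring

lemma not_collinear {Q : Set (Fin d → ℝ)} {X Y Z : Fin d → ℝ}
    (hX : X ∈ Q.extremePoints ℝ) (hY : Y ∈ Q.extremePoints ℝ) (hZ : Z ∈ Q.extremePoints ℝ)
    (hXY : X ≠ Y) (hYZ : Y ≠ Z) (hXZ : X ≠ Z)
    {β γ : ℝ} (hsum : β + γ = 1) (hrel : Y = β • X + γ • Z) : False := by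
  rcases le_or_gt β 0 with hβ | hβ
  · rcases eq_or_lt_of_le hβ with hβ0 | hβ0
    · -- β = 0, γ = 1 : Y = Z
      apply hYZ
      have hγ1 : γ = 1 := by linarith
      rw [hrel, hβ0, hγ1, zero_smul, zero_add, one_smul]
    · -- β < 0 : Z ∈ openSegment Y X
      have hγ : 0 < γ := by linarith
      have hmem : Z ∈ openSegment ℝ Y X := by
        refine ⟨1/γ, -β/γ, by positivity, div_pos (by linarith) hγ, ?_, ?_⟩
        · field_simp; linarith
        · rw [hrel]
          match_scalars <;> field_simp <;> ring
      exact hYZ (hZ.2 hY.1 hX.1 hmem)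
  · rcases le_or_gt γ 0 with hγ | hγ
    · rcases eq_or_lt_of_le hγ with hγ0 | hγ0
      · apply hXY
        have hβ1 : β = 1 := by linarith
        rw [hrel, hγ0, hβ1, zero_smul, add_zero, one_smul]
      · -- γ < 0 : X ∈ openSegment Y Z
        have hmem : X ∈ openSegment ℝ Y Z := by
          refine ⟨1/β, -γ/β, by positivity, div_pos (by linarith) hβ, ?_, ?_⟩
          · field_simp; linarith
          · rw [hrel]
            match_scalars <;> field_simp <;> ring
        exact hXY ((hX.2 hY.1 hZ.1 hmem)).symm
    · -- both positive : Y ∈ openSegment X Z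
      have hmem : Y ∈ openSegment ℝ X Z := ⟨β, γ, hβ, hγ, hsum, hrel.symm⟩
      exact hXY (hY.2 hX.1 hZ.1 hmem)

-- geometry


variable (b : AffineBasis (Fin (d + 1)) ℝ (Fin d → ℝ))

lemma mem_int (x : Fin d → ℝ) :
    x ∈ interior (convexHull ℝ (range ⇑b)) ↔ ∀ i, 0 < b.coord i x := by
  rw [b.interior_convexHull]; exact Iff.rfl

lemma exists_third (hd : 2 ≤ d) (i k : Fin (d + 1)) : ∃ j, j ≠ i ∧ j ≠ k := by
  classical
  have hcard : 2 < Fintype.card (Fin (d + 1)) := by simp; omega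
  have hne : (({i, k} : Finset (Fin (d + 1)))ᶜ).Nonempty := by
    rw [← Finset.card_pos, Finset.card_compl]
    have h2 : ({i, k} : Finset (Fin (d + 1))).card ≤ 2 :=
      (Finset.card_insert_le _ _).trans (by simp)
    omega
  obtain ⟨j, hj⟩ := hne
  rw [Finset.mem_compl, Finset.mem_insert, Finset.mem_singleton] at hj
  push_neg at hj
  exact ⟨j, hj.1, hj.2⟩

lemma coord_lt_one (hd : 2 ≤ d) {x : Fin d → ℝ}
    (hx : x ∈ interior (convexHull ℝ (range ⇑b))) (i : Fin (d + 1)) : b.coord i x < 1 := by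
  classical
  have hpos := (mem_int b x).1 hx
  have hsum := b.sum_coord_apply_eq_one x
  obtain ⟨j, hj, -⟩ := exists_third hd i i
  have hj' : j ∈ Finset.univ.erase i := Finset.mem_erase.mpr ⟨hj, Finset.mem_univ j⟩
  have hle : b.coord j x ≤ ∑ k ∈ Finset.univ.erase i, b.coord k x :=
    Finset.single_le_sum (fun k _ => (hpos k).le) hj'
  have hsplit := Finset.add_sum_erase Finset.univ (fun k => b.coord k x) (Finset.mem_univ i)
  have hjpos := hpos j
  linarith [hsum]

lemma extreme_vertex {x : Fin d → ℝ}
    (hx : x ∈ Set.extremePoints ℝ (convexHull ℝ (range ⇑b))) : ∃ i, b i = x := by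
  have h : x ∈ range ⇑b := extremePoints_convexHull_subset hx
  exact Set.mem_range.mp h

lemma vertex_not_interior (hd : 2 ≤ d) (i : Fin (d + 1)) :
    b i ∉ interior (convexHull ℝ (range ⇑b)) := by
  intro hxi
  obtain ⟨j, hj, -⟩ := exists_third hd i i
  have h := (mem_int b _).1 hxi j
  rw [b.coord_apply, if_neg hj] at h
  exact lt_irrefl _ h

lemma lin_diff (k : Fin (d + 1)) (x y : Fin d → ℝ) :
    (b.coord k).linear (x - y) = b.coord k x - b.coord k y := by
  simpa [vsub_eq_sub] using (b.coord k).linearMap_vsub x y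


lemma opp (hd : 2 ≤ d) {wa wb va vb : Fin d → ℝ}
    (hwa : wa ∈ interior (convexHull ℝ (range ⇑b)))
    (hwb : wb ∈ interior (convexHull ℝ (range ⇑b)))
    (hva : va ∈ Set.extremePoints ℝ (convexHull ℝ (range ⇑b)))
    (hvb : vb ∈ Set.extremePoints ℝ (convexHull ℝ (range ⇑b)))
    (hcr : (segment ℝ wa wb ∩ segment ℝ va vb).Nonempty) : False := by
  obtain ⟨x, hx1, hx2⟩ := hcr
  obtain ⟨ia, hia⟩ := extreme_vertex b hva
  obtain ⟨ib, hib⟩ := extreme_vertex b hvb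
  obtain ⟨k, hk1, hk2⟩ := exists_third hd ia ib
  have hconv : Convex ℝ (interior (convexHull ℝ (range ⇑b))) :=
    (convex_convexHull ℝ _).interior
  have hxi : x ∈ interior (convexHull ℝ (range ⇑b)) := hconv.segment_subset hwa hwb hx1
  have hpos := (mem_int b x).1 hxi k
  obtain ⟨a1, a2, ha1, ha2, hs, hc⟩ := hx2
  have hcomb := Convex.combo_affine_apply (f := b.coord k) hs (x := va) (y := vb)
  rw [hc, ← hia, ← hib, b.coord_apply, b.coord_apply, if_neg hk1, if_neg hk2] at hcomb
  simp only [smul_eq_mul, mul_zero, add_zero] at hcomb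
  linarith

lemma straight (hd : 2 ≤ d)
    (hcl : frontier (convexHull ℝ (range ⇑b)) ∩ {x | IsLatticePt d x}
         = Set.extremePoints ℝ (convexHull ℝ (range ⇑b)))
    {wa wb va vb : Fin d → ℝ} {c : ℝ}
    (hwa : wa ∈ interior (convexHull ℝ (range ⇑b)))
    (hwb : wb ∈ interior (convexHull ℝ (range ⇑b)))
    (hla : IsLatticePt d wa) (hlb : IsLatticePt d wb)
    (hlva : IsLatticePt d va) (hlvb : IsLatticePt d vb)
    (hwab : wa ≠ wb)
    (hva : va ∈ Set.extremePoints ℝ (convexHull ℝ (range ⇑b)))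
    (hvb : vb ∈ Set.extremePoints ℝ (convexHull ℝ (range ⇑b)))
    (hvab : va ≠ vb)
    (hrel : wb - wa = c • (vb - va)) : False := by
  obtain ⟨ia, hia⟩ := extreme_vertex b hva
  obtain ⟨ib, hib⟩ := extreme_vertex b hvb
  have hiab : ia ≠ ib := fun h => hvab (by rw [← hia, ← hib, h])
  obtain ⟨X, hX⟩ := lattice_sub hlvb hlva
  obtain ⟨Y, hY⟩ := lattice_sub hlb hla
  have hXne : cz X ≠ 0 := by
    rw [← hX]; exact sub_ne_zero.mpr (Ne.symm hvab)
  have hYX : cz Y = c • cz X := by rw [← hX, ← hY]; exact hrel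
  obtain ⟨G, p, q, hqpos, hXG, hYG⟩ := para hXne hYX
  have hp0 : p ≠ 0 := by
    intro h
    apply hwab
    have h2 : wb - wa = 0 := by
      rw [hY, hYG, h]; norm_num
    have := sub_eq_zero.mp h2
    exact this.symm
  have hq1 : q = 1 := by
    by_contra hq2
    have h2 : (2:ℤ) ≤ q := by omega
    have hq0 : (0:ℝ) < (q:ℝ) := by exact_mod_cast hqpos
    set t : ℝ := 1 / (q : ℝ) with ht
    have ht0 : 0 < t := by positivity
    have ht1 : t < 1 := by
      rw [ht, div_lt_one hq0]
      exact_mod_cast (by omega : (1:ℤ) < q)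
    have hGt : cz G = t • (vb - va) := by
      rw [hX, hXG, smul_smul, ht, one_div, inv_mul_cancel₀ (ne_of_gt hq0), one_smul]
    have hzcomb : (1 - t) • va + t • vb = va + cz G := by rw [hGt]; module
    have hzseg : va + cz G ∈ segment ℝ va vb :=
      ⟨1 - t, t, by linarith, by linarith, by ring, hzcomb⟩
    have hzH : va + cz G ∈ convexHull ℝ (range ⇑b) :=
      (convex_convexHull ℝ _).segment_subset (extremePoints_subset hva)
        (extremePoints_subset hvb) hzseg
    have hznotint : va + cz G ∉ interior (convexHull ℝ (range ⇑b)) := by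
      intro hzi
      obtain ⟨k, hk1, hk2⟩ := exists_third hd ia ib
      have hpos := (mem_int b _).1 hzi k
      have hcomb := Convex.combo_affine_apply (f := b.coord k)
        (by ring : (1 - t) + t = 1) (x := va) (y := vb)
      have hva0 : b.coord k va = 0 := by rw [← hia, b.coord_apply, if_neg hk1]
      have hvb0 : b.coord k vb = 0 := by rw [← hib, b.coord_apply, if_neg hk2]
      rw [hzcomb, hva0, hvb0] at hcomb
      simp only [smul_eq_mul, mul_zero, add_zero] at hcomb
      linarith
    have hzfr : va + cz G ∈ frontier (convexHull ℝ (range ⇑b)) := by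
      rw [IsClosed.frontier_eq (((Set.finite_range ⇑b).isCompact_convexHull (𝕜 := ℝ)).isClosed)]
      exact ⟨hzH, hznotint⟩
    have hzlat : IsLatticePt d (va + cz G) := lattice_add_cz hlva G
    have hzext : va + cz G ∈ Set.extremePoints ℝ (convexHull ℝ (range ⇑b)) := by
      rw [← hcl]; exact ⟨hzfr, hzlat⟩
    obtain ⟨l, hl⟩ := extreme_vertex b hzext
    have h1 : b.coord l (va + cz G) = 1 := by rw [← hl, b.coord_apply, if_pos rfl]
    have hcomb := Convex.combo_affine_apply (f := b.coord l)
      (by ring : (1 - t) + t = 1) (x := va) (y := vb)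
    have hcva : b.coord l va = if l = ia then 1 else 0 := by rw [← hia, b.coord_apply]
    have hcvb : b.coord l vb = if l = ib then 1 else 0 := by rw [← hib, b.coord_apply]
    rw [hzcomb, h1, hcva, hcvb] at hcomb
    by_cases hlia : l = ia
    · rw [if_pos hlia, if_neg (by rw [hlia]; exact hiab)] at hcomb
      simp only [smul_eq_mul, mul_one, mul_zero, add_zero] at hcomb
      linarith
    · rw [if_neg hlia] at hcomb
      by_cases hlib : l = ib
      · rw [if_pos hlib] at hcomb
        simp only [smul_eq_mul, mul_one, mul_zero, zero_add] at hcomb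
        linarith
      · rw [if_neg hlib] at hcomb
        simp only [smul_eq_mul, mul_zero, add_zero] at hcomb
        linarith
  have hXGG : cz X = cz G := by rw [hXG, hq1]; norm_num
  have hfin : wb - wa = (p:ℝ) • (vb - va) := by rw [hY, hYG, ← hXGG, ← hX]
  have hld : b.coord ib wb - b.coord ib wa
      = (p:ℝ) * (b.coord ib vb - b.coord ib va) := by
    have h3 : (b.coord ib).linear (wb - wa) = (b.coord ib).linear ((p:ℝ) • (vb - va)) := by
      rw [hfin]
    rw [lin_diff, LinearMap.map_smul, lin_diff] at h3
    simpa [smul_eq_mul] using h3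
  have hvbc : b.coord ib vb = 1 := by rw [← hib, b.coord_apply, if_pos rfl]
  have hvac : b.coord ib va = 0 := by rw [← hia, b.coord_apply, if_neg (Ne.symm hiab)]
  rw [hvbc, hvac, sub_zero, mul_one] at hld
  have hwa1 := (mem_int b wa).1 hwa ib
  have hwa2 := coord_lt_one b hd hwa ib
  have hwb1 := (mem_int b wb).1 hwb ib
  have hwb2 := coord_lt_one b hd hwb ib
  have habs : |b.coord ib wb - b.coord ib wa| < 1 := abs_lt.mpr ⟨by linarith, by linarith⟩
  rw [hld] at habs
  have hple : (1:ℝ) ≤ |(p:ℝ)| := by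
    have := Int.one_le_abs hp0
    calc (1:ℝ) ≤ ((|p| : ℤ) : ℝ) := by exact_mod_cast this
    _ = |(p:ℝ)| := by push_cast; ring
  linarith

lemma mixed (hd : 2 ≤ d) {Q : Set (Fin d → ℝ)} {wa wb va vb : Fin d → ℝ} {c : ℝ}
    (hwa : wa ∈ interior (convexHull ℝ (range ⇑b)))
    (hwb : wb ∈ interior (convexHull ℝ (range ⇑b)))
    (hla : IsLatticePt d wa) (hlb : IsLatticePt d wb)
    (hlva : IsLatticePt d va) (hlvb : IsLatticePt d vb)
    (hva : va ∈ Set.extremePoints ℝ (convexHull ℝ (range ⇑b)))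
    (hvb : vb ∈ Set.extremePoints ℝ (convexHull ℝ (range ⇑b)))
    (hvab : va ≠ vb)
    (hQva : va ∈ Set.extremePoints ℝ Q) (hQvb : vb ∈ Set.extremePoints ℝ Q)
    (hQwb : wb ∈ Set.extremePoints ℝ Q)
    (hcr : (segment ℝ va wb ∩ segment ℝ wa vb).Nonempty)
    (hrel : wa - va = c • (vb - wb)) : False := by
  obtain ⟨ia, hia⟩ := extreme_vertex b hva
  obtain ⟨ib, hib⟩ := extreme_vertex b hvb
  have hiab : ia ≠ ib := fun h => hvab (by rw [← hia, ← hib, h])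
  have hvaint : va ∉ interior (convexHull ℝ (range ⇑b)) := by
    rw [← hia]; exact vertex_not_interior b hd ia
  have hvbint : vb ∉ interior (convexHull ℝ (range ⇑b)) := by
    rw [← hib]; exact vertex_not_interior b hd ib
  have hvawa : va ≠ wa := fun h => hvaint (h ▸ hwa)
  have hvawb : va ≠ wb := fun h => hvaint (h ▸ hwb)
  have hvbwb : vb ≠ wb := fun h => hvbint (h ▸ hwb)
  have hc0 : c ≠ 0 := by
    intro h
    rw [h, zero_smul, sub_eq_zero] at hrel
    exact hvawa hrel.symm
  obtain ⟨x, hx1, hx2⟩ := hcr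
  obtain ⟨a1, a2, ha1, ha2, hs12, hc1⟩ := hx1
  obtain ⟨b1, b2, hb1, hb2, hs34, hc2⟩ := hx2
  have heq : a1 • va + a2 • wb = b1 • wa + b2 • vb := by rw [hc1, hc2]
  have hmaster : (b1 * c + b2) • vb = (a1 - b1) • va + (a2 + b1 * c) • wb := by
    linear_combination (norm := module) -heq - b1 • hrel
  by_cases hA : b1 * c + b2 = 0
  · -- A = 0 : crossing together with noncollinearity forces c < 0
    have hsum0 : (a1 - b1) + (a2 + b1 * c) = 0 := by linarith
    have h0 : (a1 - b1) • va + (a2 + b1 * c) • wb = 0 := by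
      rw [← hmaster, hA, zero_smul]
    have hneg : a2 + b1 * c = -(a1 - b1) := by linarith
    have h1 : (a1 - b1) • (va - wb) = 0 := by
      rw [hneg, neg_smul, ← sub_eq_add_neg] at h0
      rw [smul_sub]; exact h0
    have hae : a1 - b1 = 0 := by
      rcases smul_eq_zero.mp h1 with h | h
      · exact h
      · exact absurd (sub_eq_zero.mp h) hvawb
    have hzero : b1 * c = -a2 := by linarith
    have hb1ne : b1 ≠ 0 := by
      intro h
      rw [h, zero_mul, zero_add] at hA
      linarith
    have hb1pos : 0 < b1 := lt_of_le_of_ne hb1 (Ne.symm hb1ne)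
    have hcneg : c < 0 := by
      rcases lt_or_gt_of_ne hc0 with h | h
      · exact h
      · nlinarith
    set c' : ℝ := -c with hc'
    have hc'pos : 0 < c' := by rw [hc']; linarith
    have hrel' : va - wa = c' • (vb - wb) := by
      rw [hc']; linear_combination (norm := module) -hrel
    obtain ⟨X, hX⟩ := lattice_sub hlvb hlb
    obtain ⟨Y, hY⟩ := lattice_sub hlva hla
    have hXne : cz X ≠ 0 := by
      rw [← hX]; exact sub_ne_zero.mpr hvbwb
    have hYX : cz Y = c' • cz X := by rw [← hX, ← hY]; exact hrel'
    obtain ⟨G, p, q, hqpos, hXG, hYG⟩ := para hXne hYX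
    have hGne : cz G ≠ 0 := by
      intro h
      rw [h, smul_zero] at hXG
      exact hXne hXG
    have hq0R : (0:ℝ) < (q:ℝ) := by exact_mod_cast hqpos
    obtain ⟨i1, hi1⟩ : ∃ i, cz G i ≠ 0 := by
      by_contra hcon
      push_neg at hcon
      exact hGne (by funext i; simpa using hcon i)
    have hpq : (p:ℝ) = c' * q := by
      have e1 : (p:ℝ) * cz G i1 = (c' * q) * cz G i1 := by
        have e2 := congrFun hYG i1
        have e3 := congrFun hYX i1
        have e4 := congrFun hXG i1
        simp only [Pi.smul_apply, smul_eq_mul] at e2 e3 e4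
        rw [e2] at e3
        rw [e4] at e3
        rw [e3]; ring
      exact mul_right_cancel₀ hi1 e1
    have hppos : 0 < p := by
      have : (0:ℝ) < (p:ℝ) := by rw [hpq]; positivity
      exact_mod_cast this
    have hp0R : (0:ℝ) < (p:ℝ) := by exact_mod_cast hppos
    have hp1R : (1:ℝ) ≤ (p:ℝ) := by exact_mod_cast hppos
    have hq1R : (1:ℝ) ≤ (q:ℝ) := by exact_mod_cast hqpos
    have hGp : cz G = (1/(p:ℝ)) • (va - wa) := by
      rw [hY, hYG, smul_smul, one_div, inv_mul_cancel₀ (ne_of_gt hp0R), one_smul]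
    have hGq : cz G = (1/(q:ℝ)) • (vb - wb) := by
      rw [hX, hXG, smul_smul, one_div, inv_mul_cancel₀ (ne_of_gt hq0R), one_smul]
    have hu1comb : (1/(p:ℝ)) • wa + (1 - 1/(p:ℝ)) • va = va - cz G := by
      rw [hGp]; module
    have hu2comb : (1/(q:ℝ)) • wb + (1 - 1/(q:ℝ)) • vb = vb - cz G := by
      rw [hGq]; module
    have hu1 : va - cz G ∈ interior (convexHull ℝ (range ⇑b)) := by
      rw [← hu1comb]
      refine (convex_convexHull ℝ _).combo_interior_self_mem_interior hwa
        (extremePoints_subset hva) (by positivity) ?_ (by ring)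
      have : 1/(p:ℝ) ≤ 1 := by
        rw [div_le_one hp0R]; exact hp1R
      linarith
    have hu2 : vb - cz G ∈ interior (convexHull ℝ (range ⇑b)) := by
      rw [← hu2comb]
      refine (convex_convexHull ℝ _).combo_interior_self_mem_interior hwb
        (extremePoints_subset hvb) (by positivity) ?_ (by ring)
      have : 1/(q:ℝ) ≤ 1 := by
        rw [div_le_one hq0R]; exact hq1R
      linarith
    have hdiff : (vb - cz G) - (va - cz G) = vb - va := by abel
    have hlin : b.coord ib (vb - cz G) - b.coord ib (va - cz G)
        = b.coord ib vb - b.coord ib va := by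
      rw [← lin_diff, ← lin_diff, hdiff]
    have hvbc : b.coord ib vb = 1 := by rw [← hib, b.coord_apply, if_pos rfl]
    have hvac : b.coord ib va = 0 := by rw [← hia, b.coord_apply, if_neg (Ne.symm hiab)]
    have h1 := (mem_int b _).1 hu1 ib
    have h2 := coord_lt_one b hd hu2 ib
    rw [hvbc, hvac] at hlin
    linarith
  · -- A ≠ 0 : vb is an affine combination of va and wb, contradicting extremality
    have hsum : (a1 - b1)/(b1*c+b2) + (a2 + b1*c)/(b1*c+b2) = 1 := by
      field_simp
      linarith
    have h5 : vb = (b1*c+b2)⁻¹ • ((a1 - b1) • va + (a2 + b1*c) • wb) := by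
      rw [← hmaster, smul_smul, inv_mul_cancel₀ hA, one_smul]
    have hcomb : vb = ((a1 - b1)/(b1*c+b2)) • va + ((a2 + b1*c)/(b1*c+b2)) • wb := by
      rw [h5, smul_add, smul_smul, smul_smul, div_eq_inv_mul, div_eq_inv_mul]
    exact not_collinear hQva hQvb hQwb hvab hvbwb hvawb hsum hcomb

end NPE



/-- In a clean lattice `d`-simplex (`d ≥ 2`) with at least two interior
lattice points, a planar quadrilateral whose vertices are two interior lattice points
`w₁ ≠ w₂` and two vertices `v ≠ v'` of `T` has no pair of parallel opposite edges.
The cyclic order `q 0, q 1, q 2, q 3` of the quadrilateral is encoded by the crossing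
of the diagonals. -/
theorem no_parallel_edges (d : ℕ) (hd : 2 ≤ d) (T : Set (Fin d → ℝ))
    (hT : IsLatticeSimplex d T) (hclean : IsClean d T)
    (hint : 2 ≤ {x ∈ interior T | IsLatticePt d x}.ncard)
    (w₁ w₂ v v' : Fin d → ℝ)
    (hw₁ : w₁ ∈ interior T) (hw₂ : w₂ ∈ interior T)
    (hl₁ : IsLatticePt d w₁) (hl₂ : IsLatticePt d w₂) (hww : w₁ ≠ w₂)
    (hv : v ∈ Set.extremePoints ℝ T) (hv' : v' ∈ Set.extremePoints ℝ T) (hvv : v ≠ v')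
    (hcop : Coplanar ℝ {w₁, w₂, v, v'})
    (hext : ∀ x ∈ ({w₁, w₂, v, v'} : Set (Fin d → ℝ)),
      x ∈ Set.extremePoints ℝ (convexHull ℝ {w₁, w₂, v, v'}))
    (q : Fin 4 → Fin d → ℝ) (hq : Set.range q = {w₁, w₂, v, v'})
    (hqinj : Function.Injective q)
    (hcyc : (segment ℝ (q 0) (q 2) ∩ segment ℝ (q 1) (q 3)).Nonempty) :
    (¬ ∃ c : ℝ, q 1 - q 0 = c • (q 3 - q 2)) ∧
    (¬ ∃ c : ℝ, q 2 - q 1 = c • (q 0 - q 3)) := by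
  classical
  obtain ⟨V, hind, hTeq⟩ := hT
  have hcard : Fintype.card (Fin (d + 1)) = Module.finrank ℝ (Fin d → ℝ) + 1 := by simp
  have htot : affineSpan ℝ (Set.range (fun i => fun j => ((V i j : ℤ) : ℝ))) = ⊤ :=
    hind.affineSpan_eq_top_iff_card_eq_finrank_add_one.mpr hcard
  set b : AffineBasis (Fin (d + 1)) ℝ (Fin d → ℝ) := ⟨_, hind, htot⟩ with hbdef
  have hbcoe : ⇑b = fun i => fun j => ((V i j : ℤ) : ℝ) := rfl
  have hTb : T = convexHull ℝ (Set.range ⇑b) := by rw [hTeq, hbcoe]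
  rw [hTb] at hclean hw₁ hw₂ hv hv'
  have hcl : frontier (convexHull ℝ (Set.range ⇑b)) ∩ {x | IsLatticePt d x}
      = Set.extremePoints ℝ (convexHull ℝ (Set.range ⇑b)) := hclean
  have hlatV : ∀ x, x ∈ Set.extremePoints ℝ (convexHull ℝ (Set.range ⇑b)) →
      IsLatticePt d x := by
    intro x hx
    obtain ⟨i, hi⟩ := NPE.extreme_vertex b hx
    intro j
    exact ⟨V i j, by rw [← hi]; rfl⟩
  have hlv : IsLatticePt d v := hlatV v hv
  have hlv' : IsLatticePt d v' := hlatV v' hv'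
  have AUX : ∀ r : Fin 4 → Fin d → ℝ, Set.range r = {w₁, w₂, v, v'} →
      Function.Injective r →
      (segment ℝ (r 0) (r 2) ∩ segment ℝ (r 1) (r 3)).Nonempty →
      ¬ ∃ c : ℝ, r 1 - r 0 = c • (r 3 - r 2) := by
    intro r hr hri hcy
    rintro ⟨c, hc⟩
    have hmem : ∀ m : Fin 4, r m = w₁ ∨ r m = w₂ ∨ r m = v ∨ r m = v' := by
      intro m
      have h : r m ∈ ({w₁, w₂, v, v'} : Set (Fin d → ℝ)) := hr ▸ Set.mem_range_self m
      simpa [Set.mem_insert_iff, Set.mem_singleton_iff] using h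
    obtain ⟨a, ha⟩ : ∃ a, r a = w₁ := by
      have h : w₁ ∈ Set.range r := by rw [hr]; simp
      exact h
    obtain ⟨a', ha'⟩ : ∃ a', r a' = w₂ := by
      have h : w₂ ∈ Set.range r := by rw [hr]; simp
      exact h
    have haa : a ≠ a' := fun h => hww (by rw [← ha, h, ha'])
    have hother : ∀ m, m ≠ a → m ≠ a' → (r m = v ∨ r m = v') := by
      intro m h1 h2
      rcases hmem m with h | h | h | h
      · exact absurd (hri (h.trans ha.symm)) h1
      · exact absurd (hri (h.trans ha'.symm)) h2
      · exact Or.inl h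
      · exact Or.inr h
    have hWint : ∀ m : Fin 4, (r m = w₁ ∨ r m = w₂) →
        r m ∈ interior (convexHull ℝ (Set.range ⇑b)) := by
      rintro m (h | h) <;> rw [h] <;> assumption
    have hWlat : ∀ m : Fin 4, (r m = w₁ ∨ r m = w₂) → IsLatticePt d (r m) := by
      rintro m (h | h) <;> rw [h] <;> assumption
    have hVe : ∀ x : Fin d → ℝ, (x = v ∨ x = v') →
        x ∈ Set.extremePoints ℝ (convexHull ℝ (Set.range ⇑b)) := by
      rintro x (rfl | rfl)
      · exact hv
      · exact hv'
    have hVl : ∀ x : Fin d → ℝ, (x = v ∨ x = v') → IsLatticePt d x := by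
      rintro x (rfl | rfl)
      · exact hlv
      · exact hlv'
    have hQe : ∀ m : Fin 4, r m ∈ Set.extremePoints ℝ (convexHull ℝ {w₁, w₂, v, v'}) := by
      intro m
      apply hext
      rw [← hr]
      exact Set.mem_range_self m
    have hrne : ∀ m m' : Fin 4, m ≠ m' → r m ≠ r m' := fun m m' h hmm => h (hri hmm)
    have hswap : (segment ℝ (r 1) (r 3) ∩ segment ℝ (r 0) (r 2)).Nonempty := by
      obtain ⟨x, h1, h2⟩ := hcy
      exact ⟨x, h2, h1⟩
    have hcne : c ≠ 0 := by
      intro h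
      rw [h, zero_smul, sub_eq_zero] at hc
      exact hrne 1 0 (by decide) hc
    fin_cases a <;> fin_cases a'
    · exact haa rfl
    · -- w₁ at 0, w₂ at 1 : straight
      exact NPE.straight b hd hcl (hWint 0 (Or.inl ha)) (hWint 1 (Or.inr ha'))
        (hWlat 0 (Or.inl ha)) (hWlat 1 (Or.inr ha'))
        (hVl _ (hother 2 (by decide) (by decide))) (hVl _ (hother 3 (by decide) (by decide)))
        (hrne 0 1 (by decide))
        (hVe _ (hother 2 (by decide) (by decide))) (hVe _ (hother 3 (by decide) (by decide)))
        (hrne 2 3 (by decide)) hc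
    · -- w₁ at 0, w₂ at 2 : opposite
      exact NPE.opp b hd (hWint 0 (Or.inl ha)) (hWint 2 (Or.inr ha'))
        (hVe _ (hother 1 (by decide) (by decide))) (hVe _ (hother 3 (by decide) (by decide)))
        hcy
    · -- w₁ at 0, w₂ at 3 : mixed, va = r 1, wa = r 0, wb = r 3, vb = r 2
      exact NPE.mixed b hd (hWint 0 (Or.inl ha)) (hWint 3 (Or.inr ha'))
        (hWlat 0 (Or.inl ha)) (hWlat 3 (Or.inr ha'))
        (hVl _ (hother 1 (by decide) (by decide))) (hVl _ (hother 2 (by decide) (by decide)))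
        (hVe _ (hother 1 (by decide) (by decide))) (hVe _ (hother 2 (by decide) (by decide)))
        (hrne 1 2 (by decide)) (hQe 1) (hQe 2) (hQe 3) hswap
        (by rw [← neg_sub (r 1) (r 0), hc, ← smul_neg, neg_sub])
    · -- w₁ at 1, w₂ at 0 : straight reversed
      exact NPE.straight b hd hcl (hWint 1 (Or.inl ha)) (hWint 0 (Or.inr ha'))
        (hWlat 1 (Or.inl ha)) (hWlat 0 (Or.inr ha'))
        (hVl _ (hother 2 (by decide) (by decide))) (hVl _ (hother 3 (by decide) (by decide)))
        (hrne 1 0 (by decide))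
        (hVe _ (hother 2 (by decide) (by decide))) (hVe _ (hother 3 (by decide) (by decide)))
        (hrne 2 3 (by decide)) (by rw [neg_smul, ← hc, neg_sub] : r 0 - r 1 = (-c) • (r 3 - r 2))
    · exact haa rfl
    · -- w₁ at 1, w₂ at 2 : mixed, va = r 0, wa = r 1, wb = r 2, vb = r 3
      exact NPE.mixed b hd (hWint 1 (Or.inl ha)) (hWint 2 (Or.inr ha'))
        (hWlat 1 (Or.inl ha)) (hWlat 2 (Or.inr ha'))
        (hVl _ (hother 0 (by decide) (by decide))) (hVl _ (hother 3 (by decide) (by decide)))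
        (hVe _ (hother 0 (by decide) (by decide))) (hVe _ (hother 3 (by decide) (by decide)))
        (hrne 0 3 (by decide)) (hQe 0) (hQe 3) (hQe 2) hcy hc
    · -- w₁ at 1, w₂ at 3 : opposite
      exact NPE.opp b hd (hWint 1 (Or.inl ha)) (hWint 3 (Or.inr ha'))
        (hVe _ (hother 0 (by decide) (by decide))) (hVe _ (hother 2 (by decide) (by decide)))
        hswap
    · -- w₁ at 2, w₂ at 0 : opposite
      exact NPE.opp b hd (hWint 0 (Or.inr ha')) (hWint 2 (Or.inl ha))
        (hVe _ (hother 1 (by decide) (by decide))) (hVe _ (hother 3 (by decide) (by decide)))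
        hcy
    · -- w₁ at 2, w₂ at 1 : mixed
      exact NPE.mixed b hd (hWint 1 (Or.inr ha')) (hWint 2 (Or.inl ha))
        (hWlat 1 (Or.inr ha')) (hWlat 2 (Or.inl ha))
        (hVl _ (hother 0 (by decide) (by decide))) (hVl _ (hother 3 (by decide) (by decide)))
        (hVe _ (hother 0 (by decide) (by decide))) (hVe _ (hother 3 (by decide) (by decide)))
        (hrne 0 3 (by decide)) (hQe 0) (hQe 3) (hQe 2) hcy hc
    · exact haa rfl
    · -- w₁ at 2, w₂ at 3 : straight (inverted scalar)
      exact NPE.straight b hd hcl (hWint 2 (Or.inl ha)) (hWint 3 (Or.inr ha'))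
        (hWlat 2 (Or.inl ha)) (hWlat 3 (Or.inr ha'))
        (hVl _ (hother 0 (by decide) (by decide))) (hVl _ (hother 1 (by decide) (by decide)))
        (hrne 2 3 (by decide))
        (hVe _ (hother 0 (by decide) (by decide))) (hVe _ (hother 1 (by decide) (by decide)))
        (hrne 0 1 (by decide))
        (by rw [hc, smul_smul, inv_mul_cancel₀ hcne, one_smul] :
          r 3 - r 2 = c⁻¹ • (r 1 - r 0))
    · -- w₁ at 3, w₂ at 0 : mixed
      exact NPE.mixed b hd (hWint 0 (Or.inr ha')) (hWint 3 (Or.inl ha))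
        (hWlat 0 (Or.inr ha')) (hWlat 3 (Or.inl ha))
        (hVl _ (hother 1 (by decide) (by decide))) (hVl _ (hother 2 (by decide) (by decide)))
        (hVe _ (hother 1 (by decide) (by decide))) (hVe _ (hother 2 (by decide) (by decide)))
        (hrne 1 2 (by decide)) (hQe 1) (hQe 2) (hQe 3) hswap
        (by rw [← neg_sub (r 1) (r 0), hc, ← smul_neg, neg_sub])
    · -- w₁ at 3, w₂ at 1 : opposite
      exact NPE.opp b hd (hWint 1 (Or.inr ha')) (hWint 3 (Or.inl ha))
        (hVe _ (hother 0 (by decide) (by decide))) (hVe _ (hother 2 (by decide) (by decide)))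
        hswap
    · -- w₁ at 3, w₂ at 2 : straight (inverted, reversed)
      have hinv : r 3 - r 2 = c⁻¹ • (r 1 - r 0) := by
        rw [hc, smul_smul, inv_mul_cancel₀ hcne, one_smul]
      exact NPE.straight b hd hcl (hWint 3 (Or.inl ha)) (hWint 2 (Or.inr ha'))
        (hWlat 3 (Or.inl ha)) (hWlat 2 (Or.inr ha'))
        (hVl _ (hother 0 (by decide) (by decide))) (hVl _ (hother 1 (by decide) (by decide)))
        (hrne 3 2 (by decide))
        (hVe _ (hother 0 (by decide) (by decide))) (hVe _ (hother 1 (by decide) (by decide)))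
        (hrne 0 1 (by decide))
        (by rw [neg_smul, ← hinv, neg_sub] : r 2 - r 3 = (-c⁻¹) • (r 1 - r 0))
    · exact haa rfl
  constructor
  · exact AUX q hq hqinj hcyc
  · have hrange : Set.range (fun m : Fin 4 => q (m + 1)) = {w₁, w₂, v, v'} := by
      rw [← hq]
      ext y
      constructor
      · rintro ⟨m, rfl⟩
        exact ⟨m + 1, rfl⟩
      · rintro ⟨m, rfl⟩
        refine ⟨m + 3, ?_⟩
        show q (m + 3 + 1) = q m
        rw [add_assoc, show (3 : Fin 4) + 1 = 0 from rfl, add_zero]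
    have hinj : Function.Injective (fun m : Fin 4 => q (m + 1)) := by
      intro x y h
      have h2 := hqinj h
      exact add_right_cancel h2
    have hcyc' : (segment ℝ (q (0 + 1)) (q (2 + 1)) ∩
        segment ℝ (q (1 + 1)) (q (3 + 1))).Nonempty := by
      obtain ⟨x, h1, h2⟩ := hcyc
      refine ⟨x, ?_, ?_⟩
      · show x ∈ segment ℝ (q 1) (q 3)
        exact h2
      · show x ∈ segment ℝ (q 2) (q 0)
        rw [segment_symm]
        exact h1
    rintro ⟨c, hc⟩
    exact AUX (fun m : Fin 4 => q (m + 1)) hrange hinj hcyc' ⟨c, hc⟩
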